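/- Let N ≥ 2 and c > 0. Let P₀ and P₁ be symmetric irreducible row-stochastic N×N matrices with P₀ ≠ P₁, let t ∈ (0,1), and set P_t = (1−t)·P₀ + t·P₁. Assume P_t is irreducible, and let M₀, M₁ and M_t be the mean first passage time matrices of P₀, P₁ and P_t respectively. Then c·Σ_{i,j} (M_t)_{ij} < (1−t)·c·Σ_{i,j} (M₀)_{ij} + t·c·Σ_{i,j} (M₁)_{ij}; that is, when the weight matrix C has identical positive entries c, the weighted sum of mean first passage times S(P,C) is a strictly convex function of P on the set of symmetric irreducible row-stochastic matrices. -/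

import Mathlib

open Matrix Finset

/-- An N×N real matrix is row-stochastic: nonnegative entries, each row sums to 1. -/
def IsRowStochastic {N : ℕ} (P : Matrix (Fin N) (Fin N) ℝ) : Prop :=
  (∀ i j, 0 ≤ P i j) ∧ ∀ i, ∑ j, P i j = 1

/-- Irreducibility: for all i, j there is k ≥ 1 with (P^k)_{ij} > 0. -/
def IsIrreducibleMC {N : ℕ} (P : Matrix (Fin N) (Fin N) ℝ) : Prop :=
  ∀ i j, ∃ k : ℕ, 1 ≤ k ∧ 0 < (P ^ k) i j

/-- M is a mean first passage time matrix of P. -/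
def IsMFPT {N : ℕ} (P M : Matrix (Fin N) (Fin N) ℝ) : Prop :=
  ∀ i j, M i j = 1 + ∑ k ∈ Finset.univ.filter (fun k => k ≠ j), P i k * M k j

namespace MFPTaux

variable {N : ℕ}

/-- all-ones matrix -/
noncomputable def Jm (N : ℕ) : Matrix (Fin N) (Fin N) ℝ := of fun _ _ => 1

/-- A(P) = I - P + J/N -/
noncomputable def Am (P : Matrix (Fin N) (Fin N) ℝ) : Matrix (Fin N) (Fin N) ℝ :=
  1 - P + (N : ℝ)⁻¹ • Jm N

/-- quadratic form -/
noncomputable def qf (A : Matrix (Fin N) (Fin N) ℝ) (v : Fin N → ℝ) : ℝ :=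
  ∑ i, ∑ j, v i * A i j * v j

lemma pow_entries_nonneg {P : Matrix (Fin N) (Fin N) ℝ} (h : ∀ i j, 0 ≤ P i j) :
    ∀ k i j, 0 ≤ (P ^ k) i j := by
  intro k
  induction k with
  | zero => intro i j; simp [Matrix.one_apply]; positivity
  | succ n ih =>
    intro i j
    rw [pow_succ, Matrix.mul_apply]
    exact Finset.sum_nonneg fun m _ => mul_nonneg (ih i m) (h m j)

lemma const_of_irred {P : Matrix (Fin N) (Fin N) ℝ} (hnn : ∀ i j, 0 ≤ P i j)
    (hirr : IsIrreducibleMC P) {v : Fin N → ℝ}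
    (hv : ∀ i j, 0 < P i j → v i = v j) : ∀ i j, v i = v j := by
  have key : ∀ k : ℕ, 1 ≤ k → ∀ i j, 0 < (P ^ k) i j → v i = v j := by
    intro k hk
    induction k, hk using Nat.le_induction with
    | base => intro i j h; exact hv i j (by simpa [pow_one] using h)
    | succ n hn ih =>
      intro i j h
      rw [pow_succ, Matrix.mul_apply] at h
      obtain ⟨m, _, hm⟩ := Finset.exists_lt_of_sum_lt (f := fun _ => (0:ℝ))
        (by simpa using h)
      have h1 : 0 < (P ^ n) i m ∧ 0 < P m j := by
        constructor
        · rcases lt_or_eq_of_le (pow_entries_nonneg hnn n i m) with h' | h'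
          · exact h'
          · exfalso; rw [← h'] at hm; simp at hm
        · rcases lt_or_eq_of_le (hnn m j) with h' | h'
          · exact h'
          · exfalso; rw [← h'] at hm; simp at hm
      exact (ih i m h1.1).trans (hv m j h1.2)
  intro i j
  obtain ⟨k, hk, hpos⟩ := hirr i j
  exact key k hk i j hpos

lemma Am_apply (P : Matrix (Fin N) (Fin N) ℝ) (i j : Fin N) :
    Am P i j = (if i = j then (1:ℝ) else 0) - P i j + (N:ℝ)⁻¹ := by
  simp [Am, Jm, Matrix.add_apply, Matrix.sub_apply, Matrix.smul_apply,
    Matrix.one_apply, Matrix.of_apply, mul_one]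

lemma qf_Am_pos {P : Matrix (Fin N) (Fin N) ℝ} (hN : 0 < N)
    (hrs : IsRowStochastic P) (hsym : P = Pᵀ) (hirr : IsIrreducibleMC P) :
    ∀ v : Fin N → ℝ, v ≠ 0 → 0 < qf (Am P) v := by
  have hsym' : ∀ i j, P i j = P j i := fun i j =>
    (congrFun (congrFun hsym i) j).trans (Matrix.transpose_apply P i j)
  have colsum : ∀ j, ∑ i, P i j = 1 := by
    intro j
    have : ∑ i, P i j = ∑ i, P j i := Finset.sum_congr rfl fun i _ => hsym' i j
    rw [this, hrs.2 j]
  intro v hv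
  set Q := ∑ i, ∑ j, P i j * (v i - v j)^2 with hQdef
  have hQnn : 0 ≤ Q :=
    Finset.sum_nonneg fun i _ => Finset.sum_nonneg fun j _ =>
      mul_nonneg (hrs.1 i j) (sq_nonneg _)
  have expand : Q = 2 * (∑ i, v i ^ 2) - 2 * ∑ i, ∑ j, v i * P i j * v j := by
    have e1 : Q = (∑ i, ∑ j, P i j * v i ^ 2) - (∑ i, ∑ j, 2 * (v i * P i j * v j))
        + ∑ i, ∑ j, P i j * v j ^ 2 := by
      rw [hQdef, ← Finset.sum_sub_distrib, ← Finset.sum_add_distrib]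
      refine Finset.sum_congr rfl fun i _ => ?_
      rw [← Finset.sum_sub_distrib, ← Finset.sum_add_distrib]
      exact Finset.sum_congr rfl fun j _ => by ring
    have e2 : (∑ i, ∑ j, P i j * v i ^ 2) = ∑ i, v i ^ 2 := by
      refine Finset.sum_congr rfl fun i _ => ?_
      rw [← Finset.sum_mul, hrs.2 i, one_mul]
    have e3 : (∑ i, ∑ j, P i j * v j ^ 2) = ∑ j, v j ^ 2 := by
      rw [Finset.sum_comm]
      refine Finset.sum_congr rfl fun j _ => ?_
      rw [← Finset.sum_mul, colsum j, one_mul]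
    have e4 : (∑ i, ∑ j, 2 * (v i * P i j * v j))
        = 2 * ∑ i, ∑ j, v i * P i j * v j := by
      rw [Finset.mul_sum]
      exact Finset.sum_congr rfl fun i _ => (Finset.mul_sum _ _ _).symm
    rw [e1, e2, e3, e4]; ring
  have q1 : qf (Am P) v = (∑ i, v i ^ 2) - (∑ i, ∑ j, v i * P i j * v j)
      + (N:ℝ)⁻¹ * (∑ i, v i)^2 := by
    have inner : ∀ i : Fin N, ∑ j, v i * Am P i j * v j
        = v i ^ 2 - (∑ j, v i * P i j * v j) + (N:ℝ)⁻¹ * (v i * ∑ j, v j) := by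
      intro i
      have step : ∀ j : Fin N, v i * Am P i j * v j
          = (if i = j then v i * v j else 0) - v i * P i j * v j
            + (N:ℝ)⁻¹ * (v i * v j) := by
        intro j
        rw [Am_apply]
        split_ifs <;> ring
      rw [Finset.sum_congr rfl fun j _ => step j, Finset.sum_add_distrib,
        Finset.sum_sub_distrib, Finset.sum_ite_eq, ← Finset.mul_sum, ← Finset.mul_sum]
      simp [sq]
    unfold qf
    rw [Finset.sum_congr rfl fun i _ => inner i, Finset.sum_add_distrib,
      Finset.sum_sub_distrib, ← Finset.mul_sum, ← Finset.sum_mul]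
    ring
  have hkey : qf (Am P) v = Q / 2 + (∑ i, v i)^2 / N := by
    rw [q1, inv_mul_eq_div]
    linarith [expand]
  have hsq : 0 ≤ (∑ i, v i)^2 / N := by positivity
  rcases lt_or_eq_of_le (add_nonneg (by linarith : (0:ℝ) ≤ Q / 2) hsq) with hpos | heq
  · rw [hkey]; linarith [hpos]
  · exfalso
    have hQ0 : Q = 0 := by linarith
    have hs0 : (∑ i, v i) = 0 := by
      have h' : (∑ i, v i)^2 / N = 0 := by linarith
      have hNpos : (0:ℝ) < N := Nat.cast_pos.mpr hN
      have := (div_eq_zero_iff.mp h').resolve_right hNpos.ne'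
      exact pow_eq_zero_iff (two_ne_zero) |>.mp this
    rw [hQdef] at hQ0
    have hloc : ∀ i j, 0 < P i j → v i = v j := by
      intro i j hij
      have hinn : ∀ i : Fin N, 0 ≤ ∑ j, P i j * (v i - v j)^2 :=
        fun i => Finset.sum_nonneg fun j _ => mul_nonneg (hrs.1 i j) (sq_nonneg _)
      have h1 : ∑ j, P i j * (v i - v j)^2 = 0 :=
        (Finset.sum_eq_zero_iff_of_nonneg (fun i _ => hinn i)).mp hQ0 i (Finset.mem_univ i)
      have h2 : P i j * (v i - v j)^2 = 0 :=
        (Finset.sum_eq_zero_iff_of_nonneg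
          (fun j _ => mul_nonneg (hrs.1 i j) (sq_nonneg _))).mp h1 j (Finset.mem_univ j)
      rcases mul_eq_zero.mp h2 with h | h
      · exact absurd h hij.ne'
      · have := pow_eq_zero_iff (two_ne_zero) |>.mp h
        linarith [sub_eq_zero.mp this]
    have hconst := const_of_irred hrs.1 hirr hloc
    obtain ⟨i0⟩ : Nonempty (Fin N) := ⟨⟨0, hN⟩⟩
    have hsum : ∑ i, v i = (N:ℝ) * v i0 := by
      rw [Finset.sum_congr rfl fun i _ => hconst i i0, Finset.sum_const,
        Finset.card_univ, Fintype.card_fin, nsmul_eq_mul]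
    have hNne : (N:ℝ) ≠ 0 := Nat.cast_ne_zero.mpr hN.ne'
    have hv0 : v i0 = 0 := by
      rcases mul_eq_zero.mp (hsum ▸ hs0) with h | h
      · exact absurd h hNne
      · exact h
    exact hv (funext fun i => (hconst i i0).trans hv0)

lemma isUnit_det_of_qf_pos {A : Matrix (Fin N) (Fin N) ℝ}
    (h : ∀ v, v ≠ 0 → 0 < qf A v) : IsUnit A.det := by
  rw [isUnit_iff_ne_zero]
  intro hdet
  obtain ⟨v, hv, hAv⟩ := Matrix.exists_mulVec_eq_zero_iff.mpr hdet
  have hq : qf A v = 0 := by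
    unfold qf
    have step : ∀ i, ∑ j, v i * A i j * v j = v i * (A.mulVec v i) := by
      intro i
      rw [Matrix.mulVec, dotProduct, Finset.mul_sum]
      exact Finset.sum_congr rfl fun j _ => by ring
    rw [Finset.sum_congr rfl fun i _ => step i, hAv]
    simp
  exact absurd hq (h v hv).ne'

lemma qf_nonneg {A : Matrix (Fin N) (Fin N) ℝ}
    (h : ∀ v, v ≠ 0 → 0 < qf A v) (w : Fin N → ℝ) : 0 ≤ qf A w := by
  rcases eq_or_ne w 0 with rfl | hw
  · simp [qf]
  · exact (h w hw).le

lemma diag_conj (A D : Matrix (Fin N) (Fin N) ℝ) (j : Fin N) :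
    (Dᵀ * A * D) j j = qf A (fun k => D k j) := by
  unfold qf
  rw [Matrix.mul_apply, Finset.sum_comm]
  refine Finset.sum_congr rfl fun l _ => ?_
  rw [Matrix.mul_apply, Finset.sum_mul]
  refine Finset.sum_congr rfl fun k _ => ?_
  rw [Matrix.transpose_apply]

lemma trace_conj_nonneg {A : Matrix (Fin N) (Fin N) ℝ}
    (h : ∀ v, v ≠ 0 → 0 < qf A v) (D : Matrix (Fin N) (Fin N) ℝ) :
    0 ≤ (Dᵀ * A * D).trace := by
  rw [Matrix.trace]
  exact Finset.sum_nonneg fun j _ => by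
    rw [Matrix.diag_apply, diag_conj]; exact qf_nonneg h _

lemma trace_conj_pos {A : Matrix (Fin N) (Fin N) ℝ}
    (h : ∀ v, v ≠ 0 → 0 < qf A v) {D : Matrix (Fin N) (Fin N) ℝ} (hD : D ≠ 0) :
    0 < (Dᵀ * A * D).trace := by
  obtain ⟨l, j, hlj⟩ : ∃ l j, D l j ≠ 0 := by
    by_contra hcon
    push_neg at hcon
    exact hD (Matrix.ext fun i j => hcon i j)
  rw [Matrix.trace]
  refine Finset.sum_pos' (fun k _ => by rw [Matrix.diag_apply, diag_conj]; exact qf_nonneg h _)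
    ⟨j, Finset.mem_univ j, ?_⟩
  rw [Matrix.diag_apply, diag_conj]
  exact h _ (fun hcol => hlj (congrFun hcol l))

lemma colsum_of_sym {P : Matrix (Fin N) (Fin N) ℝ}
    (hrs : IsRowStochastic P) (hsym : P = Pᵀ) (j : Fin N) : ∑ i, P i j = 1 := by
  have hsym' : ∀ i j, P i j = P j i := fun i j =>
    (congrFun (congrFun hsym i) j).trans (Matrix.transpose_apply P i j)
  rw [Finset.sum_congr rfl fun i _ => hsym' i j, hrs.2 j]

lemma mfpt_diag {P M : Matrix (Fin N) (Fin N) ℝ}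
    (hrs : IsRowStochastic P) (hsym : P = Pᵀ) (hM : IsMFPT P M) (j : Fin N) :
    M j j = N := by
  have heq : ∑ i, M i j
      = (N:ℝ) + ∑ k ∈ Finset.univ.filter (fun k => k ≠ j), M k j := by
    rw [Finset.sum_congr rfl fun i _ => hM i j, Finset.sum_add_distrib]
    congr 1
    · simp
    · rw [Finset.sum_comm]
      refine Finset.sum_congr rfl fun k _ => ?_
      rw [← Finset.sum_mul, colsum_of_sym hrs hsym k, one_mul]
  have hsplit : ∑ k ∈ Finset.univ.filter (fun k => k ≠ j), M k j + M j j
      = ∑ k, M k j := by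
    rw [Finset.filter_ne']
    exact Finset.sum_erase_add _ _ (Finset.mem_univ j)
  linarith [heq, hsplit]

lemma Am_mul_Jm (hN : 0 < N) {P : Matrix (Fin N) (Fin N) ℝ}
    (hrs : IsRowStochastic P) : Am P * Jm N = Jm N := by
  have hNne : (N:ℝ) ≠ 0 := Nat.cast_ne_zero.mpr hN.ne'
  ext i j
  rw [Matrix.mul_apply]
  have : ∀ k : Fin N, Am P i k * Jm N k j = Am P i k := fun k => by
    simp [Jm]
  rw [Finset.sum_congr rfl fun k _ => this k]
  have : ∑ k, Am P i k
      = (∑ k, if i = k then (1:ℝ) else 0) - (∑ k, P i k) + ∑ _k : Fin N, (N:ℝ)⁻¹ := by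
    rw [← Finset.sum_sub_distrib, ← Finset.sum_add_distrib]
    exact Finset.sum_congr rfl fun k _ => by rw [Am_apply]
  rw [this, hrs.2 i]
  simp [Jm, Finset.card_univ, hNne]

lemma sum_eq (hN : 0 < N) {P M : Matrix (Fin N) (Fin N) ℝ}
    (hrs : IsRowStochastic P) (hsym : P = Pᵀ)
    (hdet : IsUnit (Am P).det) (hM : IsMFPT P M) :
    ∑ i, ∑ j, M i j = (N:ℝ)^2 * ((Am P)⁻¹).trace := by
  have hNne : (N:ℝ) ≠ 0 := Nat.cast_ne_zero.mpr hN.ne'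
  set A := Am P with hA
  set B := A⁻¹ with hBdef
  have hAB : A * B = 1 := Matrix.mul_nonsing_inv _ hdet
  have hBA : B * A = 1 := Matrix.nonsing_inv_mul _ hdet
  have hAJ : A * Jm N = Jm N := Am_mul_Jm hN hrs
  have hBJ : B * Jm N = Jm N := by
    calc B * Jm N = B * (A * Jm N) := by rw [hAJ]
    _ = (B * A) * Jm N := by rw [Matrix.mul_assoc]
    _ = Jm N := by rw [hBA, one_mul]
  -- E1 : (1 - P) * M = J - N • P
  have hdiag : ∀ j, M j j = N := mfpt_diag hrs hsym hM
  have E1 : (1 - P) * M = Jm N - (N:ℝ) • P := by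
    ext i j
    rw [Matrix.sub_mul, one_mul, Matrix.sub_apply, Matrix.sub_apply, Matrix.smul_apply]
    have hPM : (P * M) i j
        = (∑ k ∈ Finset.univ.filter (fun k => k ≠ j), P i k * M k j) + P i j * (N:ℝ) := by
      rw [Matrix.mul_apply, Finset.filter_ne']
      rw [← Finset.sum_erase_add _ _ (Finset.mem_univ j), hdiag j]
    rw [hPM, hM i j]
    simp [Jm, smul_eq_mul]
    ring
  -- E2 : A * M = J - N•P + N⁻¹ • (J * M)
  have E2 : A * M = Jm N - (N:ℝ) • P + (N:ℝ)⁻¹ • (Jm N * M) := by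
    have : A = (1 - P) + (N:ℝ)⁻¹ • Jm N := by rw [hA]; unfold Am; abel
    rw [this, Matrix.add_mul, E1, Matrix.smul_mul]
  -- P in terms of A
  have hPA : P = 1 - A + (N:ℝ)⁻¹ • Jm N := by rw [hA]; unfold Am; abel
  have hBP : B * P = B - 1 + (N:ℝ)⁻¹ • Jm N := by
    rw [hPA, Matrix.mul_add, Matrix.mul_sub, Matrix.mul_one, Matrix.mul_smul, hBJ, hBA]
  -- M = B * (A * M)
  have hMrec : M = B * Jm N - (N:ℝ) • (B * P) + (N:ℝ)⁻¹ • (Jm N * M) := by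
    calc M = (B * A) * M := by rw [hBA, one_mul]
    _ = B * (A * M) := by rw [Matrix.mul_assoc]
    _ = B * (Jm N - (N:ℝ) • P + (N:ℝ)⁻¹ • (Jm N * M)) := by rw [E2]
    _ = B * Jm N - (N:ℝ) • (B * P) + (N:ℝ)⁻¹ • (B * (Jm N * M)) := by
        rw [Matrix.mul_add, Matrix.mul_sub, Matrix.mul_smul, Matrix.mul_smul]
    _ = B * Jm N - (N:ℝ) • (B * P) + (N:ℝ)⁻¹ • (Jm N * M) := by
        rw [← Matrix.mul_assoc, hBJ]
  -- traces
  have htrM : M.trace = (N:ℝ) * N := by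
    rw [Matrix.trace]
    rw [Finset.sum_congr rfl fun j _ => by rw [Matrix.diag_apply, hdiag j]]
    simp [Finset.card_univ, mul_comm]
  have htrJ : (Jm N).trace = (N:ℝ) := by
    rw [Matrix.trace]
    simp [Jm, Matrix.diag_apply, Finset.card_univ]
  have htrJM : (Jm N * M).trace = ∑ i, ∑ j, M i j := by
    rw [Matrix.trace, show (∑ i, ∑ j, M i j) = ∑ j, ∑ i, M i j from Finset.sum_comm]
    refine Finset.sum_congr rfl fun j _ => ?_
    rw [Matrix.diag_apply, Matrix.mul_apply]
    exact Finset.sum_congr rfl fun k _ => by simp [Jm]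
  have htrBJ : (B * Jm N).trace = (N:ℝ) := by rw [hBJ, htrJ]
  have htrBP : (B * P).trace = B.trace - (N:ℝ) + 1 := by
    rw [hBP, Matrix.trace_add, Matrix.trace_sub, Matrix.trace_smul, htrJ, Matrix.trace_one]
    simp [Fintype.card_fin, smul_eq_mul, inv_mul_cancel₀ hNne]
  have E3 : (N:ℝ) * N = (N:ℝ) - (N:ℝ) * (B.trace - (N:ℝ) + 1)
      + (N:ℝ)⁻¹ * (∑ i, ∑ j, M i j) := by
    calc (N:ℝ) * N = M.trace := htrM.symm
    _ = (B * Jm N - (N:ℝ) • (B * P) + (N:ℝ)⁻¹ • (Jm N * M)).trace := by rw [← hMrec]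
    _ = (B * Jm N).trace - (N:ℝ) * (B * P).trace + (N:ℝ)⁻¹ * (Jm N * M).trace := by
        rw [Matrix.trace_add, Matrix.trace_sub, Matrix.trace_smul, Matrix.trace_smul,
          smul_eq_mul, smul_eq_mul]
    _ = (N:ℝ) - (N:ℝ) * (B.trace - (N:ℝ) + 1) + (N:ℝ)⁻¹ * (∑ i, ∑ j, M i j) := by
        rw [htrBJ, htrBP, htrJM]
  have hinv : (N:ℝ) * (N:ℝ)⁻¹ = 1 := mul_inv_cancel₀ hNne
  linear_combination (-(N:ℝ)) * E3 - (∑ i, ∑ j, M i j) * hinv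

lemma qf_combo (A0 A1 : Matrix (Fin N) (Fin N) ℝ) (t : ℝ) (v : Fin N → ℝ) :
    qf ((1 - t) • A0 + t • A1) v = (1 - t) * qf A0 v + t * qf A1 v := by
  unfold qf
  rw [Finset.mul_sum, Finset.mul_sum, ← Finset.sum_add_distrib]
  refine Finset.sum_congr rfl fun i _ => ?_
  rw [Finset.mul_sum, Finset.mul_sum, ← Finset.sum_add_distrib]
  refine Finset.sum_congr rfl fun j _ => ?_
  simp only [Matrix.add_apply, Matrix.smul_apply, smul_eq_mul]
  ring

lemma conj_expand {A : Matrix (Fin N) (Fin N) ℝ} (hdet : IsUnit A.det)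
    (X : Matrix (Fin N) (Fin N) ℝ) :
    (X - A⁻¹) * A * (X - A⁻¹) = X * A * X - X - X + A⁻¹ := by
  have hAB : A * A⁻¹ = 1 := Matrix.mul_nonsing_inv _ hdet
  have hBA : A⁻¹ * A = 1 := Matrix.nonsing_inv_mul _ hdet
  calc (X - A⁻¹) * A * (X - A⁻¹) = (X * A - 1) * (X - A⁻¹) := by
        rw [Matrix.sub_mul, hBA]
  _ = X * A * X - X * A * A⁻¹ - (X - A⁻¹) := by
        rw [Matrix.sub_mul, Matrix.mul_sub, one_mul]
  _ = X * A * X - X - X + A⁻¹ := by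
        rw [Matrix.mul_assoc X A A⁻¹, hAB, Matrix.mul_one]
        abel

lemma trace_inv_convex {A0 A1 : Matrix (Fin N) (Fin N) ℝ} {t : ℝ}
    (h0sym : A0ᵀ = A0) (h1sym : A1ᵀ = A1)
    (h0 : ∀ v, v ≠ 0 → 0 < qf A0 v) (h1 : ∀ v, v ≠ 0 → 0 < qf A1 v)
    (hne : A0 ≠ A1) (ht0 : 0 < t) (ht1 : t < 1) :
    (((1 - t) • A0 + t • A1)⁻¹).trace
      < (1 - t) * (A0⁻¹).trace + t * (A1⁻¹).trace := by
  set At := (1 - t) • A0 + t • A1 with hAt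
  have hAtsym : Atᵀ = At := by
    rw [hAt, Matrix.transpose_add, Matrix.transpose_smul, Matrix.transpose_smul, h0sym, h1sym]
  have htq : ∀ v, v ≠ 0 → 0 < qf At v := by
    intro v hv
    rw [hAt, qf_combo]
    have q0 := h0 v hv
    have q1 := h1 v hv
    nlinarith
  have hdt : IsUnit At.det := isUnit_det_of_qf_pos htq
  have hd0 : IsUnit A0.det := isUnit_det_of_qf_pos h0
  have hd1 : IsUnit A1.det := isUnit_det_of_qf_pos h1
  set X := At⁻¹ with hX
  set B0 := A0⁻¹ with hB0
  set B1 := A1⁻¹ with hB1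
  have hXA : X * At = 1 := by rw [hX]; exact Matrix.nonsing_inv_mul _ hdt
  have hXsym : Xᵀ = X := by rw [hX, Matrix.transpose_nonsing_inv, hAtsym]
  have hB0sym : B0ᵀ = B0 := by rw [hB0, Matrix.transpose_nonsing_inv, h0sym]
  have hB1sym : B1ᵀ = B1 := by rw [hB1, Matrix.transpose_nonsing_inv, h1sym]
  set D0 := X - B0 with hD0def
  set D1 := X - B1 with hD1def
  have hD0sym : D0ᵀ = D0 := by rw [hD0def, Matrix.transpose_sub, hXsym, hB0sym]
  have hD1sym : D1ᵀ = D1 := by rw [hD1def, Matrix.transpose_sub, hXsym, hB1sym]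
  have e0 : (D0ᵀ * A0 * D0).trace = (X * A0 * X).trace - 2 * X.trace + B0.trace := by
    rw [hD0sym, hD0def, hB0, conj_expand hd0 X, Matrix.trace_add, Matrix.trace_sub,
      Matrix.trace_sub]
    ring
  have e1 : (D1ᵀ * A1 * D1).trace = (X * A1 * X).trace - 2 * X.trace + B1.trace := by
    rw [hD1sym, hD1def, hB1, conj_expand hd1 X, Matrix.trace_add, Matrix.trace_sub,
      Matrix.trace_sub]
    ring
  have sum_id : (1 - t) * (X * A0 * X).trace + t * (X * A1 * X).trace = X.trace := by
    have hXAtX : X * At * X = X := by rw [hXA, one_mul]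
    have h2 : X * At * X = (1 - t) • (X * A0 * X) + t • (X * A1 * X) := by
      rw [hAt, Matrix.mul_add, Matrix.mul_smul, Matrix.mul_smul, Matrix.add_mul,
        Matrix.smul_mul, Matrix.smul_mul]
    calc (1 - t) * (X * A0 * X).trace + t * (X * A1 * X).trace
        = ((1 - t) • (X * A0 * X) + t • (X * A1 * X)).trace := by
          rw [Matrix.trace_add, Matrix.trace_smul, Matrix.trace_smul, smul_eq_mul, smul_eq_mul]
    _ = (X * At * X).trace := by rw [← h2]
    _ = X.trace := by rw [hXAtX]
  have hDne : D0 ≠ 0 ∨ D1 ≠ 0 := by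
    by_contra h
    push_neg at h
    have h0' : X = B0 := sub_eq_zero.mp (hD0def ▸ h.1)
    have h1' : X = B1 := sub_eq_zero.mp (hD1def ▸ h.2)
    apply hne
    calc A0 = (A0⁻¹)⁻¹ := (Matrix.nonsing_inv_nonsing_inv A0 hd0).symm
    _ = X⁻¹ := by rw [← hB0, ← h0']
    _ = (A1⁻¹)⁻¹ := by rw [← hB1, ← h1']
    _ = A1 := Matrix.nonsing_inv_nonsing_inv A1 hd1
  have t0 : 0 ≤ (D0ᵀ * A0 * D0).trace := trace_conj_nonneg h0 D0
  have t1 : 0 ≤ (D1ᵀ * A1 * D1).trace := trace_conj_nonneg h1 D1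
  have tpos : 0 < (1 - t) * (D0ᵀ * A0 * D0).trace + t * (D1ᵀ * A1 * D1).trace := by
    rcases hDne with h | h
    · have := trace_conj_pos h0 h
      nlinarith
    · have := trace_conj_pos h1 h
      nlinarith
  have main_eq : (1 - t) * (D0ᵀ * A0 * D0).trace + t * (D1ᵀ * A1 * D1).trace
      = (1 - t) * B0.trace + t * B1.trace - X.trace := by
    linear_combination (1 - t) * e0 + t * e1 + sum_id
  linarith [tpos, main_eq]

lemma Am_symm {P : Matrix (Fin N) (Fin N) ℝ} (hsym : P = Pᵀ) : (Am P)ᵀ = Am P := by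
  have hsym' : ∀ i j, P i j = P j i := fun i j =>
    (congrFun (congrFun hsym i) j).trans (Matrix.transpose_apply P i j)
  ext i j
  rw [Matrix.transpose_apply, Am_apply, Am_apply, hsym' j i]
  by_cases h : i = j
  · simp [h]
  · have h' : ¬ j = i := fun hh => h hh.symm
    simp [h, h']

end MFPTaux

open MFPTaux

theorem mfpt_sum_strictly_convex {N : ℕ} (hN : 2 ≤ N) (c : ℝ) (hc : 0 < c)
    (P0 P1 : Matrix (Fin N) (Fin N) ℝ)
    (h0 : IsRowStochastic P0) (h0sym : P0 = P0ᵀ) (h0irr : IsIrreducibleMC P0)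
    (h1 : IsRowStochastic P1) (h1sym : P1 = P1ᵀ) (h1irr : IsIrreducibleMC P1)
    (hne : P0 ≠ P1)
    (t : ℝ) (ht : t ∈ Set.Ioo (0 : ℝ) 1)
    (htirr : IsIrreducibleMC ((1 - t) • P0 + t • P1))
    (M0 M1 Mt : Matrix (Fin N) (Fin N) ℝ)
    (hM0 : IsMFPT P0 M0) (hM1 : IsMFPT P1 M1)
    (hMt : IsMFPT ((1 - t) • P0 + t • P1) Mt) :
    c * ∑ i, ∑ j, Mt i j <
      (1 - t) * (c * ∑ i, ∑ j, M0 i j) + t * (c * ∑ i, ∑ j, M1 i j) := by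
  obtain ⟨ht0, ht1⟩ := ht
  have hNpos : 0 < N := lt_of_lt_of_le (by norm_num) hN
  set Pt := (1 - t) • P0 + t • P1 with hPt
  have htnn : (0:ℝ) ≤ 1 - t := by linarith
  have hPtrs : IsRowStochastic Pt := by
    constructor
    · intro i j
      rw [hPt, Matrix.add_apply, Matrix.smul_apply, Matrix.smul_apply, smul_eq_mul, smul_eq_mul]
      have := h0.1 i j; have := h1.1 i j
      nlinarith
    · intro i
      have : ∀ j, Pt i j = (1 - t) * P0 i j + t * P1 i j := fun j => by
        rw [hPt, Matrix.add_apply, Matrix.smul_apply, Matrix.smul_apply, smul_eq_mul, smul_eq_mul]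
      rw [Finset.sum_congr rfl fun j _ => this j, Finset.sum_add_distrib,
        ← Finset.mul_sum, ← Finset.mul_sum, h0.2 i, h1.2 i]
      ring
  have hPtsym : Pt = Ptᵀ := by
    rw [hPt, Matrix.transpose_add, Matrix.transpose_smul, Matrix.transpose_smul,
      ← h0sym, ← h1sym]
  -- quadratic form positivity for the three A matrices
  have q0 := qf_Am_pos hNpos h0 h0sym h0irr
  have q1 := qf_Am_pos hNpos h1 h1sym h1irr
  have qt := qf_Am_pos hNpos hPtrs hPtsym (hPt ▸ htirr)
  have hdet0 := isUnit_det_of_qf_pos q0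
  have hdet1 := isUnit_det_of_qf_pos q1
  have hdett := isUnit_det_of_qf_pos qt
  -- sums via trace formula
  have hS0 := sum_eq hNpos h0 h0sym hdet0 hM0
  have hS1 := sum_eq hNpos h1 h1sym hdet1 hM1
  have hSt := sum_eq hNpos hPtrs hPtsym hdett (hPt ▸ hMt)
  -- Am of convex combination
  have hcombo : Am Pt = (1 - t) • Am P0 + t • Am P1 := by
    ext i j
    rw [Matrix.add_apply, Matrix.smul_apply, Matrix.smul_apply, smul_eq_mul, smul_eq_mul,
      Am_apply, Am_apply, Am_apply, hPt, Matrix.add_apply, Matrix.smul_apply,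
      Matrix.smul_apply, smul_eq_mul, smul_eq_mul]
    ring
  have hAne : Am P0 ≠ Am P1 := by
    intro h
    apply hne
    ext i j
    have := congrFun (congrFun h i) j
    rw [Am_apply, Am_apply] at this
    linarith
  have key := trace_inv_convex (Am_symm h0sym) (Am_symm h1sym) q0 q1 hAne ht0 ht1
  rw [← hcombo] at key
  have hpos : (0:ℝ) < c * (N:ℝ)^2 := by positivity
  calc c * ∑ i, ∑ j, Mt i j = c * (N:ℝ)^2 * ((Am Pt)⁻¹).trace := by rw [hSt]; ring
  _ < c * (N:ℝ)^2 * ((1 - t) * ((Am P0)⁻¹).trace + t * ((Am P1)⁻¹).trace) :=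
      mul_lt_mul_of_pos_left key hpos
  _ = (1 - t) * (c * ∑ i, ∑ j, M0 i j) + t * (c * ∑ i, ∑ j, M1 i j) := by
      rw [hS0, hS1]; ring
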